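/- There exists an instance with 4 agents and 2 projects whose valuations are monotone and subadditive but which admits no core stable solution. Concretely, let 𝒩 = {1,2,3,4}, and define v_1(∅)=0, v_1(S)=2 for every nonempty proper subset S ⊊ 𝒩, v_1(𝒩)=4, and v_2(∅)=0, v_2(S)=3/2 for every nonempty S ⊆ 𝒩. Then v_1 and v_2 are monotone and subadditive, and there is no allocation S together with a payment vector p such that (S, p) is core stable. -/

import Mathlib

/-- The valuation of project 1: `v₁ ∅ = 0`, `v₁ 𝒩 = 4`, `v₁ S = 2` otherwise. -/
noncomputable def v1 : Finset (Fin 4) → ℝ :=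
  fun S => if S = ∅ then 0 else if S = Finset.univ then 4 else 2

/-- The valuation of project 2: `v₂ ∅ = 0`, `v₂ S = 3/2` otherwise. -/
noncomputable def v2 : Finset (Fin 4) → ℝ :=
  fun S => if S = ∅ then 0 else 3 / 2

lemma v1_le_four (A : Finset (Fin 4)) : v1 A ≤ 4 := by
  unfold v1; split_ifs <;> norm_num

lemma v2_le (A : Finset (Fin 4)) : v2 A ≤ 3 / 2 := by
  unfold v2; split_ifs <;> norm_num

/-- The instance with agents `Fin 4` and the two projects with valuations `v1`, `v2`
has monotone subadditive valuations but admits no core stable solution. -/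
theorem stmt0 :
    (∀ A B : Finset (Fin 4), A ⊆ B → v1 A ≤ v1 B) ∧
    (∀ A B : Finset (Fin 4), v1 (A ∪ B) ≤ v1 A + v1 B) ∧
    (∀ A B : Finset (Fin 4), A ⊆ B → v2 A ≤ v2 B) ∧
    (∀ A B : Finset (Fin 4), v2 (A ∪ B) ≤ v2 A + v2 B) ∧
    ¬ ∃ (S : Fin 2 → Finset (Fin 4)) (p : Fin 4 → ℝ),
        -- S is an allocation
        (∀ k l, k ≠ l → Disjoint (S k) (S l)) ∧
        Finset.univ.biUnion S = Finset.univ ∧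
        -- p is a payment vector
        (∀ i, 0 ≤ p i) ∧
        -- stability
        (∀ (k : Fin 2) (T : Finset (Fin 4)),
          ![v1, v2] k (S k ∪ T) ≤ ∑ i ∈ S k ∪ T, p i) ∧
        -- budget balance
        (∑ i, p i = ∑ k, ![v1, v2] k (S k)) := by
  refine ⟨?_, ?_, ?_, ?_, ?_⟩
  · intro A B h
    unfold v1
    split_ifs <;>
      first
        | (simp_all [Finset.subset_empty, Finset.univ_subset_iff]; done)
        | norm_num
  · intro A B
    unfold v1
    split_ifs <;>
      first
        | (simp_all [Finset.union_eq_empty]; done)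
        | norm_num
  · intro A B h
    unfold v2
    split_ifs <;>
      first
        | (simp_all [Finset.subset_empty]; done)
        | norm_num
  · intro A B
    unfold v2
    split_ifs <;>
      first
        | (simp_all [Finset.union_eq_empty]; done)
        | norm_num
  · rintro ⟨S, p, hdisj, hcov, hpnn, hstab, hbb⟩
    have hsum : ∑ k, ![v1, v2] k (S k) = v1 (S 0) + v2 (S 1) := by
      simp [Fin.sum_univ_two]
    have h4 : (4 : ℝ) ≤ ∑ i, p i := by
      have := hstab 0 Finset.univ
      simpa [v1, Finset.union_eq_right.mpr (Finset.subset_univ _), show (Finset.univ : Finset (Fin 4)) ≠ ∅ from by decide] using this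
    have hS0 : S 0 = Finset.univ := by
      by_contra hne
      have h1 : v1 (S 0) ≤ 2 := by
        unfold v1; split_ifs <;> norm_num
      have := h4.trans_eq (hbb.trans hsum)
      linarith [v2_le (S 1)]
    have hS1 : S 1 = ∅ := by
      have hd := hdisj 0 1 (by decide)
      rw [hS0] at hd
      exact Finset.eq_empty_of_forall_notMem
        (fun i hi => Finset.disjoint_left.mp hd (Finset.mem_univ i) hi)
    have hsum4 : ∑ i, p i = 4 := by
      rw [hbb, hsum, hS0, hS1]
      simp [v1, v2, show (Finset.univ : Finset (Fin 4)) ≠ ∅ from by decide]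
    have hp : ∀ i, (3 / 2 : ℝ) ≤ p i := by
      intro i
      have := hstab 1 {i}
      simpa [hS1, v2] using this
    have : (6 : ℝ) ≤ ∑ i, p i := by
      calc (6 : ℝ) = ∑ _i : Fin 4, (3 / 2 : ℝ) := by simp; norm_num
        _ ≤ ∑ i, p i := Finset.sum_le_sum (fun i _ => hp i)
    linarith
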